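/- Let K ≥ 1, m : Fin K → ℕ, and let M : (j : Fin K) → ℝ → Matrix (Fin (m j)) (Fin (m j)) ℝ be a family such that each M j has derivative M' j at θ₀ (HasDerivAt (M j) (M' j) θ₀) and each M j θ₀ is positive definite. Let r : (j : Fin K) → Fin (m j) → ℝ, let V θ = Matrix.blockDiagonal' (fun j => M j θ), and let R be the concatenated vector R ⟨j, i⟩ = r j i. Then the function θ ↦ (1/2) * (R ⬝ᵥ ((V θ)⁻¹ *ᵥ R)) + (1/2) * Real.log (V θ).det has derivative at θ₀ equal to ∑_{j : Fin K} (-(1/2) * (r j ⬝ᵥ (((M j θ₀)⁻¹ * M' j * (M j θ₀)⁻¹) *ᵥ r j)) + (1/2) * Matrix.trace ((M j θ₀)⁻¹ * M' j)). -/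

import Mathlib

open Matrix

attribute [local instance] Matrix.normedAddCommGroup Matrix.normedSpace



theorem entry_hasDerivAt {n : ℕ} {M : ℝ → Matrix (Fin n) (Fin n) ℝ}
    {M' : Matrix (Fin n) (Fin n) ℝ} {θ₀ : ℝ} (hM : HasDerivAt M M' θ₀) (i j : Fin n) :
    HasDerivAt (fun θ => M θ i j) (M' i j) θ₀ :=
  (hasDerivAt_pi.mp ((hasDerivAt_pi.mp hM) i)) j

-- Jacobi's formula
theorem det_hasDerivAt {n : ℕ} {M : ℝ → Matrix (Fin n) (Fin n) ℝ}
    {M' : Matrix (Fin n) (Fin n) ℝ} {θ₀ : ℝ} (hM : HasDerivAt M M' θ₀) :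
    HasDerivAt (fun θ => (M θ).det)
      (Matrix.trace (Matrix.adjugate (M θ₀) * M')) θ₀ := by
  have h1 : HasDerivAt (fun θ => (M θ).det)
      (∑ σ : Equiv.Perm (Fin n), (Equiv.Perm.sign σ : ℝ) *
        (∑ i : Fin n, (∏ j ∈ Finset.univ.erase i, M θ₀ (σ j) j) • M' (σ i) i)) θ₀ := by
    have : ∀ θ, (M θ).det = ∑ σ : Equiv.Perm (Fin n),
        (Equiv.Perm.sign σ : ℝ) * ∏ i : Fin n, M θ (σ i) i := fun θ => Matrix.det_apply' _
    simp only [this]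
    exact HasDerivAt.fun_sum fun σ _ =>
      ((HasDerivAt.fun_finsetProd (fun i _ => entry_hasDerivAt hM (σ i) i))).const_mul _
  convert h1 using 1
  -- trace (adjugate A * M') = ∑ i, det (updateCol A i (fun k => M' k i))
  have key : Matrix.trace (Matrix.adjugate (M θ₀) * M')
      = ∑ i : Fin n, ((M θ₀).updateCol i (fun k => M' k i)).det := by
    simp only [Matrix.trace, Matrix.diag, Matrix.mul_apply]
    congr 1; ext i
    rw [← Matrix.cramer_apply, Matrix.cramer_eq_adjugate_mulVec]
    rfl
  rw [key]
  -- expand each det and swap sums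
  have expand : ∀ i : Fin n, ((M θ₀).updateCol i (fun k => M' k i)).det
      = ∑ σ : Equiv.Perm (Fin n), (Equiv.Perm.sign σ : ℝ) *
          ((∏ j ∈ Finset.univ.erase i, M θ₀ (σ j) j) * M' (σ i) i) := by
    intro i
    rw [Matrix.det_apply']
    congr 1; ext σ
    congr 1
    rw [← Finset.mul_prod_erase _ _ (Finset.mem_univ i), Matrix.updateCol_self, mul_comm]
    congr 1
    exact Finset.prod_congr rfl fun j hj =>
      Matrix.updateCol_ne (Finset.ne_of_mem_erase hj)
  simp only [expand, smul_eq_mul, Finset.mul_sum]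
  exact Finset.sum_comm


theorem my_det_blockDiagonal' {K : ℕ} {m : Fin K → ℕ}
    (N : ∀ j, Matrix (Fin (m j)) (Fin (m j)) ℝ) :
    (Matrix.blockDiagonal' N).det = ∏ j, (N j).det := by
  have hbt : (Matrix.blockDiagonal' N).BlockTriangular Sigma.fst := by
    rintro ⟨k, i⟩ ⟨k', j⟩ h
    exact Matrix.blockDiagonal'_apply_ne N i j (ne_of_gt h)
  rw [hbt.det_fintype]
  refine Finset.prod_congr rfl fun j _ => ?_
  let e : Fin (m j) ≃ {p : (Σ i, Fin (m i)) // p.1 = j} :=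
  { toFun := fun i => ⟨⟨j, i⟩, rfl⟩
    invFun := fun p => Fin.cast (congrArg m p.2) p.1.2
    left_inv := fun i => rfl
    right_inv := by rintro ⟨⟨k, i⟩, rfl⟩; rfl }
  rw [← Matrix.det_submatrix_equiv_self e]
  congr 1
  ext i k
  simp [Matrix.toSquareBlock_def, Matrix.blockDiagonal'_apply_eq, e, Matrix.submatrix_apply]

theorem my_inv_blockDiagonal' {K : ℕ} {m : Fin K → ℕ}
    (N : ∀ j, Matrix (Fin (m j)) (Fin (m j)) ℝ) (h : ∀ j, (N j).det ≠ 0) :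
    (Matrix.blockDiagonal' N)⁻¹ = Matrix.blockDiagonal' (fun j => (N j)⁻¹) := by
  apply Matrix.inv_eq_right_inv
  rw [← Matrix.blockDiagonal'_mul]
  rw [show (fun j => N j * (N j)⁻¹) = fun j => (1 : Matrix (Fin (m j)) (Fin (m j)) ℝ) from
    funext fun j => Matrix.mul_nonsing_inv _ (isUnit_iff_ne_zero.mpr (h j))]
  exact Matrix.blockDiagonal'_one

theorem my_dot_blockDiagonal' {K : ℕ} {m : Fin K → ℕ}
    (N : ∀ j, Matrix (Fin (m j)) (Fin (m j)) ℝ) (R : ((j : Fin K) × Fin (m j)) → ℝ)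
    (r : ∀ j, Fin (m j) → ℝ) (hR : ∀ p, R p = r p.1 p.2) :
    R ⬝ᵥ (Matrix.blockDiagonal' N *ᵥ R) = ∑ j, r j ⬝ᵥ (N j *ᵥ r j) := by
  have hmv : ∀ (j : Fin K) (i : Fin (m j)),
      (Matrix.blockDiagonal' N *ᵥ R) ⟨j, i⟩ = (N j *ᵥ r j) i := by
    intro j i
    show ∑ p : (j : Fin K) × Fin (m j), Matrix.blockDiagonal' N ⟨j, i⟩ p * R p = _
    rw [← Finset.univ_sigma_univ, Finset.sum_sigma]
    rw [Finset.sum_eq_single j]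
    · simp only [Matrix.blockDiagonal'_apply_eq, hR]
      rfl
    · intro j' _ hj'
      refine Finset.sum_eq_zero fun k _ => ?_
      rw [Matrix.blockDiagonal'_apply_ne N i k (Ne.symm hj'), zero_mul]
    · intro h; exact absurd (Finset.mem_univ j) h
  show ∑ p : (j : Fin K) × Fin (m j), R p * (Matrix.blockDiagonal' N *ᵥ R) p = _
  rw [← Finset.univ_sigma_univ, Finset.sum_sigma]
  refine Finset.sum_congr rfl fun j _ => Finset.sum_congr rfl fun i _ => ?_
  rw [hmv j i, hR]

theorem block_hasDerivAt {n : ℕ} {M : ℝ → Matrix (Fin n) (Fin n) ℝ}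
    {M' : Matrix (Fin n) (Fin n) ℝ} {θ₀ : ℝ} (hM : HasDerivAt M M' θ₀)
    (hd0 : (M θ₀).det ≠ 0) (r : Fin n → ℝ) :
    HasDerivAt (fun θ => (1/2 : ℝ) * (r ⬝ᵥ ((M θ)⁻¹ *ᵥ r)) + (1/2) * Real.log (M θ).det)
      (-(1/2 : ℝ) * (r ⬝ᵥ (((M θ₀)⁻¹ * M' * (M θ₀)⁻¹) *ᵥ r)) +
        (1/2) * Matrix.trace ((M θ₀)⁻¹ * M')) θ₀ := by
  set A := M θ₀ with hA
  set δ := Matrix.trace (Matrix.adjugate A * M') with hδ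
  have hdet : HasDerivAt (fun θ => (M θ).det) δ θ₀ := det_hasDerivAt hM
  -- inverse as scaled adjugate
  have hinv_eq : ∀ (B : Matrix (Fin n) (Fin n) ℝ), B⁻¹ = (B.det)⁻¹ • B.adjugate := by
    intro B; rw [Matrix.inv_def, Ring.inverse_eq_inv']
  -- trace identity
  have htr : Matrix.trace (A⁻¹ * M') = δ / A.det := by
    rw [hinv_eq A, Matrix.smul_mul, Matrix.trace_smul, smul_eq_mul, div_eq_inv_mul]
  -- log det derivative
  have hlog : HasDerivAt (fun θ => Real.log (M θ).det) (δ / A.det) θ₀ := hdet.log hd0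
  -- adjugate entry derivatives
  have hadj : ∀ i j, HasDerivAt (fun θ => (M θ).adjugate i j)
      (Matrix.trace (Matrix.adjugate (A.updateRow j (Pi.single i 1)) * M'.updateRow j 0)) θ₀ := by
    intro i j
    have hup : HasDerivAt (fun θ => (M θ).updateRow j (Pi.single i 1)) (M'.updateRow j 0) θ₀ := by
      refine hasDerivAt_pi.mpr fun k => hasDerivAt_pi.mpr fun l => ?_
      rcases eq_or_ne k j with h | h
      · simpa [Matrix.updateRow_apply, h] using hasDerivAt_const θ₀ ((Pi.single i 1 : Fin n → ℝ) l)
      · simpa [Matrix.updateRow_apply, h] using entry_hasDerivAt hM k l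
    simpa only [Matrix.adjugate_apply] using det_hasDerivAt hup
  -- inverse entry derivatives
  have hdetinv : HasDerivAt (fun θ => ((M θ).det)⁻¹) (-δ / A.det ^ 2) θ₀ := hdet.inv hd0
  have hinv : ∀ i j, ∃ y, HasDerivAt (fun θ => (M θ)⁻¹ i j) y θ₀ := by
    intro i j
    have h := hdetinv.mul (hadj i j)
    refine ⟨_, h.congr_of_eventuallyEq ?_⟩
    clear h
    refine (Filter.Eventually.of_forall fun θ => ?_)
    show (M θ)⁻¹ i j = _
    rw [hinv_eq (M θ)]
    simp [smul_eq_mul]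
  choose D hD using hinv
  -- identify D via uniqueness
  have hDeq : Matrix.of D = -(A⁻¹ * M' * A⁻¹) := by
    have hev : ∀ᶠ θ in nhds θ₀, (M θ).det ≠ 0 :=
      hdet.continuousAt.eventually_ne hd0
    have hzero : M' * A⁻¹ + A * Matrix.of D = 0 := by
      ext i j
      have h1 : HasDerivAt (fun θ => ∑ k, M θ i k * (M θ)⁻¹ k j)
          (∑ k, (M' i k * A⁻¹ k j + A i k * D k j)) θ₀ :=
        HasDerivAt.fun_sum fun k _ => (entry_hasDerivAt hM i k).mul (hD k j)
      have h2 : HasDerivAt (fun _ : ℝ => (1 : Matrix (Fin n) (Fin n) ℝ) i j)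
          (∑ k, (M' i k * A⁻¹ k j + A i k * D k j)) θ₀ := by
        refine h1.congr_of_eventuallyEq ?_
        filter_upwards [hev] with θ hθ
        rw [← Matrix.mul_apply, Matrix.mul_nonsing_inv _ (isUnit_iff_ne_zero.mpr hθ)]
      have h3 := (hasDerivAt_const θ₀ ((1 : Matrix (Fin n) (Fin n) ℝ) i j)).unique h2
      have : ∑ k, (M' i k * A⁻¹ k j + A i k * D k j) = 0 := h3.symm
      rw [Finset.sum_add_distrib] at this
      simpa [Matrix.add_apply, Matrix.mul_apply, Matrix.of_apply] using this
    have hAD : A * Matrix.of D = -(M' * A⁻¹) := by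
      have := eq_neg_of_add_eq_zero_right hzero
      rw [this]
    calc Matrix.of D = (A⁻¹ * A) * Matrix.of D := by
          rw [Matrix.nonsing_inv_mul _ (isUnit_iff_ne_zero.mpr hd0), Matrix.one_mul]
      _ = A⁻¹ * (A * Matrix.of D) := by rw [Matrix.mul_assoc]
      _ = -(A⁻¹ * M' * A⁻¹) := by rw [hAD, Matrix.mul_neg, Matrix.mul_assoc]
  -- quadratic form derivative
  have hq : HasDerivAt (fun θ => r ⬝ᵥ ((M θ)⁻¹ *ᵥ r))
      (r ⬝ᵥ (Matrix.of D *ᵥ r)) θ₀ := by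
    show HasDerivAt (fun θ => ∑ i, r i * ∑ k, (M θ)⁻¹ i k * r k)
      (∑ i, r i * ∑ k, Matrix.of D i k * r k) θ₀
    exact HasDerivAt.fun_sum fun i _ => HasDerivAt.const_mul _
      (HasDerivAt.fun_sum fun k _ => (hD i k).mul_const _)
  have hq' : HasDerivAt (fun θ => r ⬝ᵥ ((M θ)⁻¹ *ᵥ r))
      (-(r ⬝ᵥ ((A⁻¹ * M' * A⁻¹) *ᵥ r))) θ₀ := by
    rw [hDeq] at hq
    simpa [Matrix.neg_mulVec, dotProduct_neg] using hq
  have := (hq'.const_mul (1/2 : ℝ)).fun_add (hlog.const_mul (1/2 : ℝ))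
  rw [htr]
  exact this.congr_deriv (by ring)


/-- When the covariance matrix is block diagonal with positive definite blocks
`M j θ` aligned with a partition of the observations, the gradient of the
Gaussian NLL decomposes into a sum over blocks:
`∑_j (−½ r_jᵀ M_j⁻¹ M_j' M_j⁻¹ r_j + ½ tr(M_j⁻¹ M_j'))`. -/
theorem hasDerivAt_nll_blockDiagonal {K : ℕ} (hK : 1 ≤ K) (m : Fin K → ℕ)
    (M : (j : Fin K) → ℝ → Matrix (Fin (m j)) (Fin (m j)) ℝ)
    (M' : (j : Fin K) → Matrix (Fin (m j)) (Fin (m j)) ℝ) (θ₀ : ℝ)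
    (hM : ∀ j, HasDerivAt (M j) (M' j) θ₀)
    (hpd : ∀ j, (M j θ₀).PosDef)
    (r : (j : Fin K) → Fin (m j) → ℝ)
    (R : ((j : Fin K) × Fin (m j)) → ℝ) (hR : ∀ p, R p = r p.1 p.2) :
    HasDerivAt
      (fun θ => (1 / 2) * (R ⬝ᵥ ((Matrix.blockDiagonal' fun j => M j θ)⁻¹ *ᵥ R)) +
        (1 / 2) * Real.log (Matrix.blockDiagonal' fun j => M j θ).det)
      (∑ j : Fin K, (-(1 / 2) * (r j ⬝ᵥ (((M j θ₀)⁻¹ * M' j * (M j θ₀)⁻¹) *ᵥ r j)) +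
        (1 / 2) * Matrix.trace ((M j θ₀)⁻¹ * M' j))) θ₀ := by
  have hdet0 : ∀ j, (M j θ₀).det ≠ 0 := fun j => (hpd j).det_pos.ne'
  have hsum : HasDerivAt
      (fun θ => ∑ j : Fin K, ((1 / 2 : ℝ) * (r j ⬝ᵥ ((M j θ)⁻¹ *ᵥ r j)) +
        (1 / 2) * Real.log (M j θ).det))
      (∑ j : Fin K, (-(1 / 2) * (r j ⬝ᵥ (((M j θ₀)⁻¹ * M' j * (M j θ₀)⁻¹) *ᵥ r j)) +
        (1 / 2) * Matrix.trace ((M j θ₀)⁻¹ * M' j))) θ₀ :=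
    HasDerivAt.fun_sum fun j _ => block_hasDerivAt (hM j) (hdet0 j) (r j)
  refine hsum.congr_of_eventuallyEq ?_
  have hev : ∀ᶠ θ in nhds θ₀, ∀ j, (M j θ).det ≠ 0 :=
    Filter.eventually_all.mpr fun j =>
      (det_hasDerivAt (hM j)).continuousAt.eventually_ne (hdet0 j)
  filter_upwards [hev] with θ hθ
  rw [my_det_blockDiagonal', my_inv_blockDiagonal' _ hθ, my_dot_blockDiagonal' _ R r hR,
      Real.log_prod (fun j _ => hθ j), Finset.mul_sum, Finset.mul_sum,
      ← Finset.sum_add_distrib]
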